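/- In T_k = M[a_1,...,a_k,b_1,...,b_k]/(a_i^2 = ρ a_i + τ b_i), for any j ≤ k one has w_j^2 = Σ_{r=0}^{j} τ^{j-r} ρ^r · wc_{r, j-r}, where w_j is the j-th elementary symmetric polynomial in the a's and wc_{i,j} is the orbit sum of the monomial a_1⋯a_i b_{i+1}⋯b_{i+j} under the Σ_k action permuting indices (with wc_{0,j} = c_j and wc_{j,0} = w_j). -/

import Mathlib

open MvPolynomial

/-- The ideal of relations `aᵢ² = ρ aᵢ + τ bᵢ` defining
`T_k = M[a_1,…,a_k,b_1,…,b_k]/(aᵢ² - ρ aᵢ - τ bᵢ)`; the `a`-variables are indexed by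
`Sum.inl` and the `b`-variables by `Sum.inr`. -/
noncomputable def relIdeal (k : ℕ) (M : Type*) [CommRing M] (ρ τ : M) :
    Ideal (MvPolynomial (Fin k ⊕ Fin k) M) :=
  Ideal.span (Set.range fun i : Fin k =>
    X (Sum.inl i) ^ 2 - (C ρ * X (Sum.inl i) + C τ * X (Sum.inr i)))

/-- `w_j`: the `j`-th elementary symmetric polynomial in the `a`-variables. -/
noncomputable def wPoly (k : ℕ) (M : Type*) [CommRing M] (j : ℕ) :
    MvPolynomial (Fin k ⊕ Fin k) M :=
  ∑ s ∈ Finset.univ.powersetCard j, ∏ i ∈ s, X (Sum.inl i)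

/-- `wc_{i,j}`: the orbit sum of the monomial `a_1⋯a_i b_{i+1}⋯b_{i+j}`, i.e. the sum over
pairs of disjoint subsets `S`, `T` with `|S| = i`, `|T| = j` of `(∏_{s∈S} a_s)(∏_{t∈T} b_t)`.
In particular `wc_{j,0} = w_j` and `wc_{0,j} = c_j`. -/
noncomputable def wcPoly (k : ℕ) (M : Type*) [CommRing M] (i j : ℕ) :
    MvPolynomial (Fin k ⊕ Fin k) M :=
  ∑ s ∈ Finset.univ.powersetCard i,
    ∑ t ∈ (Finset.univ \ s).powersetCard j,
      (∏ a ∈ s, X (Sum.inl a)) * ∏ b ∈ t, X (Sum.inr b)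

open Finset in
/-- Reindexing: summing over pairs `R ⊆ S` with `|S| = j`, `|R| = r` is the same as summing over
disjoint pairs `(R, T)` with `|R| = r`, `|T| = j - r`, via `(S, R) ↦ (R, S \ R)`. -/
private lemma keyBij {k : ℕ} {N : Type*} [AddCommMonoid N] (j r : ℕ) (hr : r ≤ j)
    (F : Finset (Fin k) → Finset (Fin k) → N) :
    ∑ S ∈ (univ : Finset (Fin k)).powersetCard j, ∑ R ∈ S.powersetCard r, F R (S \ R)
    = ∑ R ∈ (univ : Finset (Fin k)).powersetCard r,
        ∑ T ∈ (univ \ R).powersetCard (j - r), F R T := by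
  rw [sum_sigma', sum_sigma']
  refine sum_nbij' (fun p => ⟨p.2, p.1 \ p.2⟩) (fun p => ⟨p.1 ∪ p.2, p.1⟩) ?_ ?_ ?_ ?_ ?_
  · rintro ⟨S, R⟩ hp
    simp only [mem_sigma, mem_powersetCard] at hp ⊢
    obtain ⟨⟨-, hSj⟩, hRS, hRr⟩ := hp
    refine ⟨⟨subset_univ _, hRr⟩, sdiff_subset_sdiff (subset_univ _) le_rfl, ?_⟩
    rw [card_sdiff_of_subset hRS, hSj, hRr]
  · rintro ⟨R, T⟩ hp
    simp only [mem_sigma, mem_powersetCard] at hp ⊢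
    obtain ⟨⟨-, hRr⟩, hT, hTc⟩ := hp
    have hd : Disjoint R T :=
      disjoint_left.2 fun x hx hxT => (mem_sdiff.1 (hT hxT)).2 hx
    refine ⟨⟨subset_univ _, ?_⟩, subset_union_left, hRr⟩
    rw [card_union_of_disjoint hd, hRr, hTc]
    omega
  · rintro ⟨S, R⟩ hp
    simp only [mem_sigma, mem_powersetCard] at hp
    simp [union_sdiff_of_subset hp.2.1]
  · rintro ⟨R, T⟩ hp
    simp only [mem_sigma, mem_powersetCard] at hp
    have hd : Disjoint R T :=
      disjoint_left.2 fun x hx hxT => (mem_sdiff.1 (hp.2.1 hxT)).2 hx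
    simp [union_sdiff_cancel_left hd]
  · rintro ⟨S, R⟩ _
    rfl

open Finset in
/-- Polynomial identity: expanding `Σ_{|S|=j} Π_{i∈S} (ρ aᵢ + τ bᵢ)` gives
`Σ_r τ^{j-r} ρ^r wc_{r,j-r}`. -/
private lemma keyPoly (k : ℕ) (M : Type*) [CommRing M] (ρ τ : M) (j : ℕ) :
    ∑ S ∈ (univ : Finset (Fin k)).powersetCard j,
      ∏ i ∈ S, (C ρ * X (Sum.inl i) + C τ * X (Sum.inr i) : MvPolynomial (Fin k ⊕ Fin k) M)
    = ∑ r ∈ Finset.range (j + 1), C (τ ^ (j - r) * ρ ^ r) * wcPoly k M r (j - r) := by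
  calc
    _ = ∑ S ∈ (univ : Finset (Fin k)).powersetCard j, ∑ R ∈ S.powerset,
          (∏ i ∈ R, (C ρ * X (Sum.inl i))) *
            ∏ i ∈ S \ R, (C τ * X (Sum.inr i) : MvPolynomial (Fin k ⊕ Fin k) M) := by
        simp_rw [Finset.prod_add]
    _ = ∑ S ∈ (univ : Finset (Fin k)).powersetCard j, ∑ r ∈ Finset.range (j + 1),
          ∑ R ∈ S.powersetCard r,
            (∏ i ∈ R, (C ρ * X (Sum.inl i))) *
              ∏ i ∈ S \ R, (C τ * X (Sum.inr i) : MvPolynomial (Fin k ⊕ Fin k) M) := by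
        refine Finset.sum_congr rfl fun S hS => ?_
        rw [Finset.sum_powerset, (mem_powersetCard.1 hS).2]
    _ = ∑ r ∈ Finset.range (j + 1), ∑ S ∈ (univ : Finset (Fin k)).powersetCard j,
          ∑ R ∈ S.powersetCard r,
            (∏ i ∈ R, (C ρ * X (Sum.inl i))) *
              ∏ i ∈ S \ R, (C τ * X (Sum.inr i) : MvPolynomial (Fin k ⊕ Fin k) M) :=
        Finset.sum_comm
    _ = ∑ r ∈ Finset.range (j + 1), ∑ R ∈ (univ : Finset (Fin k)).powersetCard r,
          ∑ T ∈ (univ \ R).powersetCard (j - r),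
            (∏ i ∈ R, (C ρ * X (Sum.inl i))) *
              ∏ i ∈ T, (C τ * X (Sum.inr i) : MvPolynomial (Fin k ⊕ Fin k) M) := by
        refine Finset.sum_congr rfl fun r hr => ?_
        exact keyBij j r (Nat.lt_succ_iff.1 (mem_range.1 hr))
          (fun R T => (∏ i ∈ R, (C ρ * X (Sum.inl i))) *
            ∏ i ∈ T, (C τ * X (Sum.inr i) : MvPolynomial (Fin k ⊕ Fin k) M))
    _ = _ := by
        unfold wcPoly
        refine Finset.sum_congr rfl fun r hr => ?_
        rw [Finset.mul_sum]
        refine Finset.sum_congr rfl fun R hR => ?_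
        rw [Finset.mul_sum]
        refine Finset.sum_congr rfl fun T hT => ?_
        rw [prod_mul_distrib, prod_mul_distrib, prod_const, prod_const,
          (mem_powersetCard.1 hR).2, (mem_powersetCard.1 hT).2, ← C_pow, ← C_pow, C_mul]
        ring

/-- in `T_k`, for `j ≤ k`,
`w_j² = Σ_{r=0}^{j} τ^{j-r} ρ^r · wc_{r, j-r}`. -/
theorem stmt10 (k : ℕ) (M : Type*) [CommRing M] [Algebra (ZMod 2) M] (ρ τ : M)
    (j : ℕ) (hj : j ≤ k) :
    (Ideal.Quotient.mk (relIdeal k M ρ τ) (wPoly k M j)) ^ 2 =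
      ∑ r ∈ Finset.range (j + 1),
        Ideal.Quotient.mk (relIdeal k M ρ τ)
          (C (τ ^ (j - r) * ρ ^ r) * wcPoly k M r (j - r)) := by
  set mk := Ideal.Quotient.mk (relIdeal k M ρ τ) with hmkdef
  have h2M : (2 : M) = 0 := by
    have h : (2 : M) = algebraMap (ZMod 2) M 2 := (map_ofNat _ 2).symm
    rw [h, show (2 : ZMod 2) = 0 from rfl, map_zero]
  have h2Q : (2 : MvPolynomial (Fin k ⊕ Fin k) M ⧸ relIdeal k M ρ τ) = 0 := by
    have h : (2 : MvPolynomial (Fin k ⊕ Fin k) M ⧸ relIdeal k M ρ τ)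
        = algebraMap M _ 2 := (map_ofNat _ 2).symm
    rw [h, h2M, map_zero]
  have sumsq : ∀ (s : Finset (Finset (Fin k)))
      (f : Finset (Fin k) → MvPolynomial (Fin k ⊕ Fin k) M ⧸ relIdeal k M ρ τ),
      (∑ x ∈ s, f x) ^ 2 = ∑ x ∈ s, f x ^ 2 := by
    intro s f
    induction s using Finset.induction with
    | empty => simp
    | insert a s h ih =>
      rw [Finset.sum_insert h, Finset.sum_insert h, add_sq, h2Q, ih]
      ring
  have hsq : ∀ i : Fin k, mk (X (Sum.inl i) ^ 2)
      = mk (C ρ * X (Sum.inl i) + C τ * X (Sum.inr i)) := fun i =>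
    Ideal.Quotient.eq.2 (Ideal.subset_span ⟨i, rfl⟩)
  calc
    (mk (wPoly k M j)) ^ 2
        = (∑ S ∈ Finset.univ.powersetCard j, mk (∏ i ∈ S, X (Sum.inl i))) ^ 2 := by
          rw [wPoly, map_sum]
    _ = ∑ S ∈ Finset.univ.powersetCard j, (mk (∏ i ∈ S, X (Sum.inl i))) ^ 2 := sumsq _ _
    _ = ∑ S ∈ Finset.univ.powersetCard j,
          mk (∏ i ∈ S, (C ρ * X (Sum.inl i) + C τ * X (Sum.inr i))) := by
        refine Finset.sum_congr rfl fun S _ => ?_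
        rw [← map_pow, ← Finset.prod_pow, map_prod, map_prod]
        exact Finset.prod_congr rfl fun i _ => hsq i
    _ = mk (∑ S ∈ Finset.univ.powersetCard j,
          ∏ i ∈ S, (C ρ * X (Sum.inl i) + C τ * X (Sum.inr i))) := (map_sum mk _ _).symm
    _ = mk (∑ r ∈ Finset.range (j + 1), C (τ ^ (j - r) * ρ ^ r) * wcPoly k M r (j - r)) := by
        rw [keyPoly]
    _ = _ := map_sum mk _ _
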